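/- Let f be an entropy function with infinite recession constant f'_∞ = ∞, and let ν be a Borel probability measure on ℝ^d. Then for every B > 0 the sublevel set { μ ∈ P(ℝ^d) : D_f(μ|ν) ≤ B } is uniformly tight: for every ε > 0 there exists r > 0 such that μ(ℝ^d ∖ B_r) ≤ ε for every probability measure μ with D_f(μ|ν) ≤ B, where B_r is the closed Euclidean ball of radius r around 0. -/

import Mathlib

open MeasureTheory ENNReal Filter Topology Set
open scoped ZeroAtInfty RealInnerProductSpace BoundedContinuousFunction

noncomputable section

/-- Euclidean space `ℝ^d`. -/
abbrev Rd (d : ℕ) : Type := EuclideanSpace ℝ (Fin d)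

/-- An entropy function: a proper, convex, lower semicontinuous `f : ℝ → [0,∞]`
with `f x = ∞` for `x < 0` and `f 1 = 0` (properness is automatic from `f 1 = 0`). -/
structure IsEntropy (f : ℝ → ℝ≥0∞) : Prop where
  convex : ∀ x y a b : ℝ, 0 ≤ a → 0 ≤ b → a + b = 1 →
    f (a * x + b * y) ≤ ENNReal.ofReal a * f x + ENNReal.ofReal b * f y
  lsc : LowerSemicontinuous f
  top_of_neg : ∀ x : ℝ, x < 0 → f x = ⊤
  one_eq_zero : f 1 = 0

/-- `1` is the unique minimizer of the entropy function `f`, i.e. `f t > 0` for `t ≠ 1`. -/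
def UniqueMinOne (f : ℝ → ℝ≥0∞) : Prop := ∀ t : ℝ, t ≠ 1 → 0 < f t

/-- The recession constant `f'_∞ = lim_{t → ∞} f t / t` (the limit exists for convex `f`,
so it coincides with the `limsup`). -/
noncomputable def recession (f : ℝ → ℝ≥0∞) : ℝ≥0∞ :=
  Filter.limsup (fun t : ℝ => f t / ENNReal.ofReal t) Filter.atTop

/-- The `f`-divergence of finite nonnegative measures:
`D_f(μ|ν) = ∫ f(dμ/dν) dν + f'_∞ · μˢ(ℝ^d)` where `μ = (dμ/dν) ν + μˢ`
is the Lebesgue decomposition of `μ` w.r.t. `ν` (convention `0 ⬝ ∞ = 0`). -/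
noncomputable def fDiv {d : ℕ} (f : ℝ → ℝ≥0∞) (μ ν : Measure (Rd d)) : ℝ≥0∞ :=
  ∫⁻ x, f ((μ.rnDeriv ν x).toReal) ∂ν + recession f * μ.singularPart ν Set.univ

lemma chord (f : ℝ → ℝ≥0∞) (hf : IsEntropy f) {s t : ℝ} (hs : 1 < s) (hst : s ≤ t) :
    ENNReal.ofReal ((t-1)/(s-1)) * f s ≤ f t := by
  have ht : 1 < t := lt_of_lt_of_le hs hst
  have ht0 : t - 1 ≠ 0 := ne_of_gt (by linarith)
  have hs0 : s - 1 ≠ 0 := ne_of_gt (by linarith)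
  have h1 : f s ≤ ENNReal.ofReal ((s-1)/(t-1)) * f t := by
    have := hf.convex 1 t ((t-s)/(t-1)) ((s-1)/(t-1))
      (div_nonneg (by linarith) (by linarith)) (div_nonneg (by linarith) (by linarith))
      (by field_simp; ring)
    have hs' : (t-s)/(t-1) * 1 + (s-1)/(t-1) * t = s := by field_simp; ring
    rw [hs', hf.one_eq_zero, mul_zero, zero_add] at this
    exact this
  calc ENNReal.ofReal ((t-1)/(s-1)) * f s
      ≤ ENNReal.ofReal ((t-1)/(s-1)) * (ENNReal.ofReal ((s-1)/(t-1)) * f t) := by gcongr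
    _ = ENNReal.ofReal ((t-1)/(s-1) * ((s-1)/(t-1))) * f t := by
        rw [← mul_assoc, ← ENNReal.ofReal_mul (div_nonneg (by linarith) (by linarith))]
    _ = f t := by
        rw [div_mul_div_comm, mul_comm (t-1), div_self (by positivity), ENNReal.ofReal_one, one_mul]


lemma growth (f : ℝ → ℝ≥0∞) (hf : IsEntropy f) (hrec : recession f = ⊤) (K : ℝ) (hK : 0 < K) :
    ∃ M : ℝ, 2 ≤ M ∧ ∀ t : ℝ, M ≤ t → ENNReal.ofReal (K * t) ≤ f t := by
  have hfreq : ∃ᶠ s in atTop, ENNReal.ofReal (2*K) < f s / ENNReal.ofReal s := by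
    apply Filter.frequently_lt_of_lt_limsup
    · exact Filter.IsCobounded.of_frequently_ge (Filter.Frequently.of_forall (fun x => bot_le))
    · rw [← recession]; exact hrec ▸ ENNReal.ofReal_lt_top
  obtain ⟨s, hlt, hs2'⟩ := (hfreq.and_eventually (eventually_ge_atTop 2)).exists
  refine ⟨s, hs2', fun t ht => ?_⟩
  have hfs : ENNReal.ofReal (2*K*s) ≤ f s := by
    have := (ENNReal.lt_div_iff_mul_lt
      (Or.inl ((ENNReal.ofReal_pos.mpr (by linarith)).ne'))
      (Or.inl ENNReal.ofReal_ne_top)).mp hlt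
    rw [← ENNReal.ofReal_mul (by positivity)] at this
    exact this.le
  calc ENNReal.ofReal (K * t) ≤ ENNReal.ofReal ((t-1)/(s-1) * (2*K*s)) := by
        apply ENNReal.ofReal_le_ofReal
        rw [div_mul_eq_mul_div, le_div_iff₀ (by linarith)]
        nlinarith [mul_nonneg hK.le (mul_nonneg (show (0:ℝ) ≤ s by linarith)
          (show (0:ℝ) ≤ t-2 by linarith)), mul_nonneg hK.le (show (0:ℝ) ≤ t by linarith)]
    _ = ENNReal.ofReal ((t-1)/(s-1)) * ENNReal.ofReal (2*K*s) :=
        ENNReal.ofReal_mul (div_nonneg (by linarith) (by linarith))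
    _ ≤ ENNReal.ofReal ((t-1)/(s-1)) * f s := by gcongr
    _ ≤ f t := chord f hf (by linarith) ht

lemma nu_tight {d : ℕ} (ν : Measure (EuclideanSpace ℝ (Fin d))) [IsProbabilityMeasure ν]
    {δ : ℝ≥0∞} (hδ : 0 < δ) :
    ∃ r : ℝ, 0 < r ∧ ν (Metric.closedBall (0 : EuclideanSpace ℝ (Fin d)) r)ᶜ < δ := by
  set S : ℕ → Set (EuclideanSpace ℝ (Fin d)) :=
    fun n => (Metric.closedBall (0 : EuclideanSpace ℝ (Fin d)) (n+1))ᶜ with hS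
  have hmeas : ∀ n, NullMeasurableSet (S n) ν :=
    fun n => (measurableSet_closedBall.compl).nullMeasurableSet
  have hanti : Antitone S := by
    intro m n hmn
    apply compl_subset_compl.mpr
    have : (m:ℝ) ≤ n := Nat.cast_le.mpr hmn
    exact Metric.closedBall_subset_closedBall (by linarith)
  have hint : ⋂ n, S n = ∅ := by
    ext x
    simp only [mem_iInter, mem_empty_iff_false, iff_false, not_forall, hS, mem_compl_iff,
      Metric.mem_closedBall, not_not, dist_zero_right]
    obtain ⟨n, hn⟩ := exists_nat_ge (‖x‖)
    exact ⟨n, by push_cast; linarith⟩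
  have := MeasureTheory.tendsto_measure_iInter_atTop hmeas hanti ⟨0, measure_ne_top ν _⟩
  rw [hint, measure_empty] at this
  obtain ⟨n, hn⟩ := (this.eventually_lt_const hδ).exists
  exact ⟨n+1, by positivity, hn⟩

/-- For an entropy function with infinite recession constant, sublevel sets of
`D_f(·|ν)` among probability measures are uniformly tight. -/
theorem fDiv_sublevel_tight {d : ℕ} (f : ℝ → ℝ≥0∞) (hf : IsEntropy f)
    (hrec : recession f = ⊤) (ν : Measure (Rd d)) [IsProbabilityMeasure ν]
    (B : ℝ) (hB : 0 < B) :
    ∀ ε : ℝ, 0 < ε → ∃ r : ℝ, 0 < r ∧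
      ∀ μ : Measure (Rd d), IsProbabilityMeasure μ →
        fDiv f μ ν ≤ ENNReal.ofReal B →
        μ (Metric.closedBall (0 : Rd d) r)ᶜ ≤ ENNReal.ofReal ε := by
  intro ε hε
  set K : ℝ := 2 * B / ε with hKdef
  have hK : 0 < K := by positivity
  obtain ⟨M, hM2, hM⟩ := growth f hf hrec K hK
  have hM0 : 0 < M := by linarith
  have hδ : (0:ℝ≥0∞) < ENNReal.ofReal (ε / (2*M)) := ENNReal.ofReal_pos.mpr (by positivity)
  obtain ⟨r, hr, hνr⟩ := nu_tight ν hδ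
  refine ⟨r, hr, fun μ hμ hdiv => ?_⟩
  set ρ : Rd d → ℝ≥0∞ := μ.rnDeriv ν with hρ
  -- singular part vanishes
  have hsing : μ.singularPart ν Set.univ = 0 := by
    by_contra h
    have h1 : recession f * μ.singularPart ν Set.univ ≤ ENNReal.ofReal B :=
      le_trans le_add_self hdiv
    rw [hrec, ENNReal.top_mul h] at h1
    exact (lt_irrefl ⊤ (lt_of_le_of_lt h1 ENNReal.ofReal_lt_top)).elim
  have hμeq : μ = ν.withDensity ρ := by
    have hdec := @Measure.haveLebesgueDecomposition_add _ _ μ ν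
      (@Measure.haveLebesgueDecomposition_of_sigmaFinite _ _ μ ν inferInstance inferInstance)
    rwa [Measure.measure_univ_eq_zero.mp hsing, zero_add] at hdec
  have hint : ∫⁻ x, f ((ρ x).toReal) ∂ν ≤ ENNReal.ofReal B :=
    le_trans le_self_add hdiv
  set A : Set (Rd d) := (Metric.closedBall (0 : Rd d) r)ᶜ with hA
  have hAmeas : MeasurableSet A := measurableSet_closedBall.compl
  have hμA : μ A = ∫⁻ x in A, ρ x ∂ν := by rw [hμeq, withDensity_apply _ hAmeas]
  -- pointwise a.e. bound
  have hpt : ∀ᵐ x ∂ν, ρ x ≤ ENNReal.ofReal M + f ((ρ x).toReal) / ENNReal.ofReal K := by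
    filter_upwards [Measure.rnDeriv_lt_top μ ν] with x hx
    by_cases hcase : (ρ x).toReal ≤ M
    · calc ρ x = ENNReal.ofReal ((ρ x).toReal) := (ENNReal.ofReal_toReal hx.ne).symm
        _ ≤ ENNReal.ofReal M := ENNReal.ofReal_le_ofReal hcase
        _ ≤ _ := le_self_add
    · push_neg at hcase
      have h1 : ENNReal.ofReal (K * (ρ x).toReal) ≤ f ((ρ x).toReal) := hM _ hcase.le
      have hx' : ρ x ≠ ⊤ := hx.ne
      have h2 : ρ x ≤ f ((ρ x).toReal) / ENNReal.ofReal K := by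
        calc ρ x = ENNReal.ofReal ((ρ x).toReal) := (ENNReal.ofReal_toReal hx').symm
          _ = ENNReal.ofReal (K * (ρ x).toReal / K) := by rw [mul_div_cancel_left₀ _ hK.ne']
          _ = ENNReal.ofReal (K * (ρ x).toReal) / ENNReal.ofReal K := ENNReal.ofReal_div_of_pos hK
          _ ≤ _ := by gcongr
      exact le_trans h2 le_add_self
  calc μ A = ∫⁻ x in A, ρ x ∂ν := hμA
    _ ≤ ∫⁻ x in A, (ENNReal.ofReal M + f ((ρ x).toReal) / ENNReal.ofReal K) ∂ν :=
        lintegral_mono_ae (ae_restrict_of_ae hpt)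
    _ = ENNReal.ofReal M * ν A + ∫⁻ x in A, f ((ρ x).toReal) / ENNReal.ofReal K ∂ν := by
        rw [lintegral_add_left measurable_const, setLIntegral_const]
    _ ≤ ENNReal.ofReal M * ENNReal.ofReal (ε/(2*M)) + (∫⁻ x, f ((ρ x).toReal) ∂ν) / ENNReal.ofReal K := by
        gcongr
        · calc ∫⁻ x in A, f ((ρ x).toReal) / ENNReal.ofReal K ∂ν
              ≤ ∫⁻ x, f ((ρ x).toReal) / ENNReal.ofReal K ∂ν := setLIntegral_le_lintegral _ _
            _ = (∫⁻ x, f ((ρ x).toReal) ∂ν) / ENNReal.ofReal K := by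
                simp only [div_eq_mul_inv]
                exact lintegral_mul_const' _ _ (by simp [hK])
    _ ≤ ENNReal.ofReal M * ENNReal.ofReal (ε/(2*M)) + ENNReal.ofReal B / ENNReal.ofReal K := by
        gcongr
    _ = ENNReal.ofReal (M * (ε/(2*M)) + B / K) := by
        rw [ENNReal.ofReal_add (mul_nonneg hM0.le (div_nonneg hε.le (by linarith)))
          (div_nonneg hB.le hK.le), ENNReal.ofReal_mul hM0.le, ENNReal.ofReal_div_of_pos hK]
    _ = ENNReal.ofReal ε := by
        congr 1
        rw [hKdef]
        field_simp
        ring
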